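/- With H = (S_{r_1})^{d_1} × … × (S_{r_n})^{d_n} acting on the set T = {(i,j,k) : 1 ≤ i ≤ n, 1 ≤ j ≤ r_i, k ∈ Z/d_iZ} by (h_{i,k})·(i,j,k) = (i, h_{i,k}(j), k), and with τ the permutation τ(i,j,k) = (i,j,k+1): for every r ≥ 1 and every h ∈ H, the number of r-cycles of the permutation τ∘h on T equals Σ_{i : d_i | r} X_{r/d_i}(m_i(h)), where X_ℓ counts ℓ-cycles and m_i(h) = h_{i,d_i} · … · h_{i,1} ∈ S_{r_i}. -/

import Mathlib

/-- `cycleCount σ k` is the number of `k`-cycles of `σ` (with `1`-cycles = fixed points). -/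
def cycleCount {α : Type*} [Fintype α] [DecidableEq α] (σ : Equiv.Perm α) (k : ℕ) : ℕ :=
  if k = 1 then (Finset.univ.filter fun x => σ x = x).card else Multiset.count k σ.cycleType

/-- The permutation of the grid `{1,…,r} × Z/dZ` acting by `h k` on the fiber over `k`. -/
def gridPerm (r d : ℕ) (h : Fin d → Equiv.Perm (Fin r)) : Equiv.Perm (Fin r × Fin d) where
  toFun p := (h p.2 p.1, p.2)
  invFun p := ((h p.2).symm p.1, p.2)
  left_inv p := by simp
  right_inv p := by simp

/-- The cyclic shift `τ(j,k) = (j,k+1)` of the grid. -/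
def tauGrid (r d : ℕ) : Equiv.Perm (Fin r × Fin d) :=
  (Equiv.refl (Fin r)).prodCongr (finRotate d)

/-- The descending product `m_i(h) = h_{i,d_i} ⋯ h_{i,1} ∈ S_{r_i}` (applying `h_{i,0}` first). -/
def mComp {r d : ℕ} (h : Fin d → Equiv.Perm (Fin r)) : Equiv.Perm (Fin r) :=
  ((List.ofFn h).reverse).prod

/-- The Young-type group `H = ∏ᵢ (S_{rᵢ})^{dᵢ}`. -/
abbrev BigH (n : ℕ) (r d : Fin n → ℕ) := ∀ i : Fin n, Fin (d i) → Equiv.Perm (Fin (r i))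

/-- The action of `h ∈ H` on `T = ⨿ᵢ Fin(rᵢ) × Z/dᵢZ`, permuting `j`-coordinates. -/
def hPermBig {n : ℕ} {r d : Fin n → ℕ} (h : BigH n r d) :
    Equiv.Perm (Σ i : Fin n, Fin (r i) × Fin (d i)) :=
  Equiv.sigmaCongrRight fun i => gridPerm (r i) (d i) (h i)

/-- The permutation `τ(i,j,k) = (i,j,k+1)` of `T`. -/
def tauBig (n : ℕ) (r d : Fin n → ℕ) : Equiv.Perm (Σ i : Fin n, Fin (r i) × Fin (d i)) :=
  Equiv.sigmaCongrRight fun i => tauGrid (r i) (d i)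

set_option linter.unusedSectionVars false

section Grid
variable {r : ℕ}

def Ppart {r d : ℕ} (h : Fin d → Equiv.Perm (Fin r)) (k : ℕ) : Equiv.Perm (Fin r) :=
  (((List.ofFn h).take k).reverse).prod

lemma Ppart_zero {d : ℕ} (h : Fin d → Equiv.Perm (Fin r)) : Ppart h 0 = 1 := by
  simp [Ppart]

lemma Ppart_succ {d : ℕ} (h : Fin d → Equiv.Perm (Fin r)) (k : ℕ) (hk : k < d) :
    Ppart h (k + 1) = h ⟨k, hk⟩ * Ppart h k := by
  have hlen : k < (List.ofFn h).length := by simpa using hk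
  rw [Ppart, Ppart, List.take_succ, List.getElem?_eq_getElem hlen]
  simp

lemma Ppart_top {d : ℕ} (h : Fin d → Equiv.Perm (Fin r)) : Ppart h d = mComp h := by
  rw [Ppart, mComp, List.take_of_length_le (by simp)]

lemma tau_apply {d : ℕ} (p : Fin r × Fin (d+1)) :
    tauGrid r (d+1) p = (p.1, p.2 + 1) := by
  cases p with
  | mk j k => simp [tauGrid, Equiv.prodCongr_apply]

lemma gp_apply {d : ℕ} (g : Fin d → Equiv.Perm (Fin r)) (p : Fin r × Fin d) :
    gridPerm r d g p = (g p.2 p.1, p.2) := rfl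

lemma tg_apply {d : ℕ} (g : Fin (d+1) → Equiv.Perm (Fin r)) (p : Fin r × Fin (d+1)) :
    (tauGrid r (d+1) * gridPerm r (d+1) g) p = (g p.2 p.1, p.2 + 1) := by
  rw [Equiv.Perm.mul_apply, gp_apply, tau_apply]

lemma grid_conj {e : ℕ} (h : Fin (e+1) → Equiv.Perm (Fin r)) :
    tauGrid r (e+1) * gridPerm r (e+1) h
      = gridPerm r (e+1) (fun k => Ppart h k.val)
        * (tauGrid r (e+1) * gridPerm r (e+1) (fun k => if (k : ℕ) = e then mComp h else 1))
        * (gridPerm r (e+1) (fun k => Ppart h k.val))⁻¹ := by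
  rw [eq_comm, mul_inv_eq_iff_eq_mul]
  apply Equiv.ext
  rintro ⟨j, k⟩
  simp only [Equiv.Perm.mul_apply, gp_apply, tau_apply]
  by_cases hk : (k : ℕ) = e
  · have hk1 : k + 1 = (0 : Fin (e+1)) := by
      apply Fin.ext
      rw [Fin.val_add_one]
      simp [Fin.ext_iff, hk, Fin.val_last]
    rw [if_pos hk, hk1]
    refine Prod.ext ?_ rfl
    show Ppart h ((0:Fin (e+1)):ℕ) (mComp h j) = (h k) ((Ppart h k.val) j)
    have h2 : (h k) ((Ppart h k.val) j) = Ppart h (k.val + 1) j := by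
      rw [Ppart_succ h k.val k.isLt]; rfl
    rw [h2, hk]
    simp [Ppart_zero, Ppart_top]
  · have hk1 : ((k + 1 : Fin (e+1)) : ℕ) = k.val + 1 := by
      rw [Fin.val_add_one]
      simp [Fin.ext_iff, Fin.val_last, hk]
    rw [if_neg hk]
    refine Prod.ext ?_ rfl
    show Ppart h ((k+1 : Fin (e+1)) : ℕ) ((1 : Equiv.Perm (Fin r)) j) = (h k) ((Ppart h k.val) j)
    rw [hk1, Ppart_succ h k.val k.isLt]; rfl

end Grid

lemma mod_add_eq_self {D k t : ℕ} (hk : k < D) : (k + t) % D = k ↔ D ∣ t := by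
  have hD : 0 < D := lt_of_le_of_lt (Nat.zero_le _) hk
  constructor
  · intro h
    have h2 : (k + t) % D = (k + t % D) % D := by
      conv_lhs => rw [← Nat.div_add_mod t D]
      rw [show k + (D * (t / D) + t % D) = k + t % D + (t / D) * D by ring,
        Nat.add_mul_mod_self_right]
    have h3 : t % D < D := Nat.mod_lt _ hD
    rcases lt_or_ge (k + t % D) D with hlt | hge
    · rw [Nat.mod_eq_of_lt hlt] at h2
      have : t % D = 0 := by omega
      exact Nat.dvd_of_mod_eq_zero this
    · rw [Nat.mod_eq_sub_mod hge] at h2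
      rw [Nat.mod_eq_of_lt (show k + t % D - D < D by omega)] at h2
      omega
  · rintro ⟨c, rfl⟩
    rw [Nat.add_mul_mod_self_left, Nat.mod_eq_of_lt hk]

lemma div_add_of_dvd {D k t : ℕ} (hk : k < D) (h : D ∣ t) : (k + t) / D = t / D := by
  have hD : 0 < D := lt_of_le_of_lt (Nat.zero_le _) hk
  obtain ⟨c, rfl⟩ := h
  rw [Nat.add_mul_div_left _ _ hD, Nat.div_eq_of_lt hk, Nat.mul_div_cancel_left _ hD, Nat.zero_add]

lemma succ_divmod_wrap {D x : ℕ} (hD : 0 < D) (h : x % D = D - 1) :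
    (x + 1) / D = x / D + 1 ∧ (x + 1) % D = 0 := by
  have h2 := Nat.div_add_mod x D
  have h3 : D * (x / D + 1) = D * (x / D) + D := Nat.mul_succ D _
  have h4 : x + 1 = D * (x / D + 1) := by omega
  constructor
  · rw [h4, Nat.mul_div_cancel_left _ hD]
  · rw [h4, Nat.mul_mod_right]

lemma succ_divmod_nowrap {D x : ℕ} (hD : 0 < D) (h : x % D ≠ D - 1) :
    (x + 1) / D = x / D ∧ (x + 1) % D = x % D + 1 := by
  have h2 := Nat.div_add_mod x D
  have h3 : x % D < D := Nat.mod_lt _ hD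
  have h4 : x + 1 = x % D + 1 + D * (x / D) := by omega
  have h5 : x % D + 1 < D := by omega
  constructor
  · rw [h4, Nat.add_mul_div_left _ _ hD, Nat.div_eq_of_lt h5, Nat.zero_add]
  · rw [h4, Nat.add_mul_mod_self_left, Nat.mod_eq_of_lt h5]

lemma model_pow {e : ℕ} (m : Equiv.Perm (Fin r)) (t : ℕ) (j : Fin r) (k : Fin (e+1)) :
    ((tauGrid r (e+1) * gridPerm r (e+1) (fun k => if (k : ℕ) = e then m else 1)) ^ t) (j, k)
      = ((m ^ ((k.val + t) / (e+1))) j,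
         ⟨(k.val + t) % (e+1), Nat.mod_lt _ (Nat.succ_pos e)⟩) := by
  induction t with
  | zero =>
    rw [pow_zero]
    refine Prod.ext ?_ (Fin.ext ?_)
    · show j = (m ^ ((k.val + 0) / (e+1))) j
      have : (k.val + 0) / (e+1) = 0 := Nat.div_eq_of_lt (by omega)
      rw [this, pow_zero]; rfl
    · show (k : ℕ) = (k.val + 0) % (e+1)
      rw [Nat.mod_eq_of_lt (show (k:ℕ) + 0 < e + 1 by omega)]
      omega
  | succ t ih =>
    rw [pow_succ', Equiv.Perm.mul_apply, ih, tg_apply]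
    simp only
    by_cases hs : (k.val + t) % (e+1) = e
    · rw [if_pos hs]
      obtain ⟨hdiv, hmod⟩ := succ_divmod_wrap (D := e+1) (show 0 < e+1 by omega) (x := k.val + t) (by omega)
      refine Prod.ext ?_ (Fin.ext ?_)
      · show m ((m ^ ((k.val + t) / (e+1))) j) = (m ^ ((k.val + (t+1)) / (e+1))) j
        rw [show k.val + (t+1) = k.val + t + 1 by ring, hdiv, pow_succ', Equiv.Perm.mul_apply]
      · show ((⟨(k.val + t) % (e+1), _⟩ : Fin (e+1)) + 1).val = (k.val + (t+1)) % (e+1)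
        rw [Fin.val_add_one, show k.val + (t+1) = k.val + t + 1 by ring, hmod]
        simp [Fin.ext_iff, Fin.val_last, hs]
    · rw [if_neg hs]
      obtain ⟨hdiv, hmod⟩ := succ_divmod_nowrap (D := e+1) (show 0 < e+1 by omega) (x := k.val + t) (by omega)
      refine Prod.ext ?_ (Fin.ext ?_)
      · show (1 : Equiv.Perm (Fin r)) ((m ^ ((k.val + t) / (e+1))) j)
            = (m ^ ((k.val + (t+1)) / (e+1))) j
        rw [show k.val + (t+1) = k.val + t + 1 by ring, hdiv]; rfl
      · show ((⟨(k.val + t) % (e+1), _⟩ : Fin (e+1)) + 1).val = (k.val + (t+1)) % (e+1)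
        rw [Fin.val_add_one, show k.val + (t+1) = k.val + t + 1 by ring, hmod]
        simp [Fin.ext_iff, Fin.val_last, hs]

lemma model_isPeriodicPt {e : ℕ} (m : Equiv.Perm (Fin r)) (t : ℕ) (j : Fin r) (k : Fin (e+1)) :
    Function.IsPeriodicPt
        (⇑(tauGrid r (e+1) * gridPerm r (e+1) (fun k => if (k : ℕ) = e then m else 1))) t (j, k)
      ↔ ((e+1) * Function.minimalPeriod (⇑m) j) ∣ t := by
  rw [Function.IsPeriodicPt, Function.IsFixedPt, Equiv.Perm.iterate_eq_pow, model_pow,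
    Prod.ext_iff]
  constructor
  · rintro ⟨hj, hk2⟩
    have hmod : (k.val + t) % (e+1) = k.val := congrArg Fin.val hk2
    have hdvd : (e+1) ∣ t := (mod_add_eq_self k.isLt).mp hmod
    have hq : (k.val + t) / (e+1) = t / (e+1) := div_add_of_dvd k.isLt hdvd
    rw [hq] at hj
    have hper : Function.minimalPeriod (⇑m) j ∣ t / (e+1) :=
      Function.IsPeriodicPt.minimalPeriod_dvd
        (by rw [Function.IsPeriodicPt, Function.IsFixedPt, Equiv.Perm.iterate_eq_pow]; exact hj)
    obtain ⟨c, hc⟩ := hper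
    obtain ⟨s, rfl⟩ := hdvd
    rw [Nat.mul_div_cancel_left s (Nat.succ_pos e)] at hc
    exact ⟨c, by rw [hc]; ring⟩
  · rintro ⟨c, rfl⟩
    set p := Function.minimalPeriod (⇑m) j with hp
    have hdvd : (e+1) ∣ (e+1) * p * c := ⟨p * c, by ring⟩
    have hmod : (k.val + (e+1) * p * c) % (e+1) = k.val := (mod_add_eq_self k.isLt).mpr hdvd
    have hq : (k.val + (e+1) * p * c) / (e+1) = p * c := by
      rw [div_add_of_dvd k.isLt hdvd, show (e+1) * p * c = (e+1) * (p * c) by ring,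
        Nat.mul_div_cancel_left _ (Nat.succ_pos e)]
    refine ⟨?_, Fin.ext hmod⟩
    rw [hq]
    have hper : Function.IsPeriodicPt (⇑m) (p * c) j :=
      Function.isPeriodicPt_iff_minimalPeriod_dvd.mpr ⟨c, rfl⟩
    rw [Function.IsPeriodicPt, Function.IsFixedPt, Equiv.Perm.iterate_eq_pow] at hper
    exact hper

section Aux
variable {α : Type*} [Fintype α] [DecidableEq α]

lemma minimalPeriod_perm_eq (σ : Equiv.Perm α) (x : α) (hx : σ x ≠ x) :
    Function.minimalPeriod σ x = (σ.cycleOf x).support.card := by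
  have hcyc : (σ.cycleOf x).IsCycle := Equiv.Perm.isCycle_cycleOf σ hx
  have hx' : (σ.cycleOf x) x ≠ x := by rwa [Equiv.Perm.cycleOf_apply_self]
  have key : ∀ n : ℕ, Function.IsPeriodicPt (⇑σ) n x ↔ (σ.cycleOf x).support.card ∣ n := by
    intro n
    rw [Function.IsPeriodicPt, Function.IsFixedPt, Equiv.Perm.iterate_eq_pow,
      ← Equiv.Perm.cycleOf_pow_apply_self σ x n, ← hcyc.pow_eq_one_iff' hx']
    rw [← hcyc.orderOf]
    exact (orderOf_dvd_iff_pow_eq_one).symm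
  exact Nat.dvd_antisymm
    (Function.IsPeriodicPt.minimalPeriod_dvd ((key _).mpr dvd_rfl))
    ((key _).mp (Function.isPeriodicPt_minimalPeriod _ _))

lemma card_filter_minimalPeriod (σ : Equiv.Perm α) (R : ℕ) (hR : 1 ≤ R) :
    (Finset.univ.filter fun x => Function.minimalPeriod (⇑σ) x = R).card
      = R * cycleCount σ R := by
  rcases eq_or_ne R 1 with rfl | hR1
  · rw [cycleCount, if_pos rfl, one_mul]
    congr 1; ext x
    simp [Function.minimalPeriod_eq_one_iff_isFixedPt, Function.IsFixedPt]
  · rw [cycleCount, if_neg hR1]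
    have hset : (Finset.univ.filter fun x => Function.minimalPeriod (⇑σ) x = R)
        = (σ.cycleFactorsFinset.filter fun c => c.support.card = R).biUnion
            Equiv.Perm.support := by
      ext x
      simp only [Finset.mem_filter, Finset.mem_univ, true_and, Finset.mem_biUnion]
      constructor
      · intro hx
        have hfix : σ x ≠ x := by
          intro hfx
          have : Function.minimalPeriod (⇑σ) x = 1 :=
            Function.minimalPeriod_eq_one_iff_isFixedPt.mpr hfx
          omega
        refine ⟨σ.cycleOf x, ⟨?_, ?_⟩, ?_⟩
        · exact Equiv.Perm.cycleOf_mem_cycleFactorsFinset_iff.mpr (Equiv.Perm.mem_support.mpr hfix)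
        · rw [← minimalPeriod_perm_eq σ x hfix, hx]
        · exact Equiv.Perm.mem_support_cycleOf_iff.mpr
            ⟨Equiv.Perm.SameCycle.refl _ _, Equiv.Perm.mem_support.mpr hfix⟩
      · rintro ⟨c, hc, hxc⟩
        have hcx : c = σ.cycleOf x := Equiv.Perm.cycle_is_cycleOf hxc hc.1
        have hfix : σ x ≠ x := by
          have h2 := (Equiv.Perm.mem_cycleFactorsFinset_iff.mp hc.1).2 x hxc
          intro hfx
          exact Equiv.Perm.mem_support.mp hxc (by rw [h2, hfx])
        rw [minimalPeriod_perm_eq σ x hfix, ← hcx, hc.2]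
    rw [hset, Finset.card_biUnion]
    · have hsum : ∑ c ∈ (σ.cycleFactorsFinset.filter fun c => c.support.card = R),
          c.support.card
          = R * (σ.cycleFactorsFinset.filter fun c => c.support.card = R).card := by
        rw [Finset.sum_congr rfl (fun c hc => (Finset.mem_filter.mp hc).2), Finset.sum_const,
          smul_eq_mul, mul_comm]
      rw [hsum]
      congr 1
      rw [Equiv.Perm.cycleType_def, Multiset.count_map]
      rw [Finset.card, Finset.filter_val]
      congr 1
      exact Multiset.filter_congr (fun c _ => by simp [eq_comm])
    · intro c hc c' hc' hne
      exact Equiv.Perm.Disjoint.disjoint_support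
        (Equiv.Perm.cycleFactorsFinset_pairwise_disjoint σ (Finset.mem_filter.mp hc).1
          (Finset.mem_filter.mp hc').1 hne)

lemma cycleCount_conj (ψ σ : Equiv.Perm α) (k : ℕ) :
    cycleCount (ψ * σ * ψ⁻¹) k = cycleCount σ k := by
  by_cases hk : k = 1
  · subst hk
    simp only [cycleCount, if_pos rfl]
    apply Finset.card_bij' (fun x _ => ψ⁻¹ x) (fun y _ => ψ y)
    · intro a ha
      simp only [Finset.mem_filter, Finset.mem_univ, true_and,
        Equiv.Perm.mul_apply] at ha ⊢
      have : ψ (σ (ψ⁻¹ a)) = a := (Finset.mem_filter.mp ha).2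
      calc σ (ψ⁻¹ a) = ψ⁻¹ (ψ (σ (ψ⁻¹ a))) := by simp
        _ = ψ⁻¹ a := by rw [this]
    · intro a ha
      simp only [Finset.mem_filter, Finset.mem_univ, true_and,
        Equiv.Perm.mul_apply] at ha ⊢
      exact Finset.mem_filter.mpr ⟨Finset.mem_univ _, by simp [ha]⟩
    · intro a _; simp
    · intro a _; simp
  · simp only [cycleCount, if_neg hk, Equiv.Perm.cycleType_conj]

end Aux

section Grid2
variable {r : ℕ}

lemma model_minimalPeriod {e : ℕ} (m : Equiv.Perm (Fin r)) (j : Fin r) (k : Fin (e+1)) :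
    Function.minimalPeriod
        (⇑(tauGrid r (e+1) * gridPerm r (e+1) (fun k => if (k : ℕ) = e then m else 1))) (j, k)
      = (e+1) * Function.minimalPeriod (⇑m) j := by
  apply Nat.dvd_antisymm
  · exact Function.IsPeriodicPt.minimalPeriod_dvd ((model_isPeriodicPt m _ j k).mpr dvd_rfl)
  · exact (model_isPeriodicPt m _ j k).mp (Function.isPeriodicPt_minimalPeriod _ _)

lemma grid_cc (D : ℕ) (h : Fin D → Equiv.Perm (Fin r)) (R : ℕ) (hR : 1 ≤ R) :
    cycleCount (tauGrid r D * gridPerm r D h) R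
      = if D ∣ R then cycleCount (mComp h) (R / D) else 0 := by
  cases D with
  | zero =>
    have h0 : R * cycleCount (tauGrid r 0 * gridPerm r 0 h) R = 0 := by
      rw [← card_filter_minimalPeriod _ R hR]
      rw [Finset.card_eq_zero.mpr]
      apply Finset.eq_empty_of_forall_notMem
      rintro ⟨j, k⟩ _
      exact absurd k.isLt (by omega)
    rw [if_neg (by omega)]
    rcases Nat.mul_eq_zero.mp h0 with h1 | h1
    · omega
    · exact h1
  | succ e =>
    have h1 : cycleCount (tauGrid r (e+1) * gridPerm r (e+1) h) R
        = cycleCount (tauGrid r (e+1) * gridPerm r (e+1)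
            (fun k => if (k : ℕ) = e then mComp h else 1)) R := by
      rw [grid_conj h, cycleCount_conj]
    rw [h1]
    apply Nat.eq_of_mul_eq_mul_left (show 0 < R by omega)
    rw [← card_filter_minimalPeriod _ R hR]
    by_cases hdvd : (e+1) ∣ R
    · rw [if_pos hdvd]
      have hR1 : 1 ≤ R / (e+1) := Nat.one_le_div_iff (Nat.succ_pos e) |>.mpr
        (Nat.le_of_dvd (by omega) hdvd)
      have hset : (Finset.univ.filter fun p : Fin r × Fin (e+1) =>
            Function.minimalPeriod (⇑(tauGrid r (e+1) * gridPerm r (e+1)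
              (fun k => if (k : ℕ) = e then mComp h else 1))) p = R)
          = (Finset.univ.filter fun j : Fin r =>
              Function.minimalPeriod (⇑(mComp h)) j = R / (e+1)) ×ˢ
            (Finset.univ : Finset (Fin (e+1))) := by
        ext ⟨j, k⟩
        simp only [Finset.mem_filter, Finset.mem_univ, true_and, Finset.mem_product,
          and_true]
        rw [model_minimalPeriod]
        obtain ⟨c, rfl⟩ := hdvd
        rw [Nat.mul_div_cancel_left c (Nat.succ_pos e)]
        constructor
        · intro hc
          exact Nat.eq_of_mul_eq_mul_left (Nat.succ_pos e) hc
        · intro hc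
          rw [hc]
      rw [hset, Finset.card_product, Finset.card_univ, Fintype.card_fin,
        card_filter_minimalPeriod _ _ hR1]
      obtain ⟨c, rfl⟩ := hdvd
      rw [Nat.mul_div_cancel_left c (Nat.succ_pos e)]
      ring
    · rw [if_neg hdvd, Nat.mul_zero]
      rw [Finset.card_eq_zero.mpr]
      apply Finset.eq_empty_of_forall_notMem
      rintro ⟨j, k⟩ hmem
      rw [Finset.mem_filter] at hmem
      have h2 := hmem.2
      rw [model_minimalPeriod] at h2
      exact hdvd ⟨_, h2.symm⟩

end Grid2

section Sigma
variable {n : ℕ} {β : Fin n → Type*} [∀ i, DecidableEq (β i)] [∀ i, Fintype (β i)]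

lemma sigmaCongrRight_perm_pow (F : ∀ i, Equiv.Perm (β i)) (t : ℕ) :
    ((Equiv.sigmaCongrRight F : Equiv.Perm (Σ i, β i)) ^ t)
      = Equiv.sigmaCongrRight (fun i => (F i) ^ t) := by
  induction t with
  | zero =>
    apply Equiv.ext
    rintro ⟨i, p⟩
    rfl
  | succ t ih =>
    apply Equiv.ext
    rintro ⟨i, p⟩
    rw [pow_succ, Equiv.Perm.mul_apply, ih]
    show (⟨i, (F i ^ t) ((F i) p)⟩ : Σ i, β i) = ⟨i, (F i ^ (t+1)) p⟩
    rw [pow_succ, Equiv.Perm.mul_apply]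

lemma sigma_minimalPeriod (F : ∀ i, Equiv.Perm (β i)) (i : Fin n) (p : β i) :
    Function.minimalPeriod (⇑(Equiv.sigmaCongrRight F : Equiv.Perm (Σ i, β i))) ⟨i, p⟩
      = Function.minimalPeriod (⇑(F i)) p := by
  rw [Function.minimalPeriod_eq_minimalPeriod_iff]
  intro t
  rw [Function.IsPeriodicPt, Function.IsPeriodicPt, Function.IsFixedPt, Function.IsFixedPt,
    Equiv.Perm.iterate_eq_pow, Equiv.Perm.iterate_eq_pow, sigmaCongrRight_perm_pow]
  constructor
  · intro hh
    have := congrArg (fun q : Σ i, β i => q.1) hh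
    exact eq_of_heq (Sigma.mk.inj_iff.mp hh).2
  · intro hh
    show (⟨i, (F i ^ t) p⟩ : Σ i, β i) = ⟨i, p⟩
    rw [hh]

end Sigma


/-- The number of `R`-cycles of `τ∘h` on `T` equals `∑_{i : dᵢ ∣ R} X_{R/dᵢ}(mᵢ(h))`. -/
theorem stmt6 (n : ℕ) (r d : Fin n → ℕ) (h : BigH n r d) (R : ℕ) (hR : 1 ≤ R) :
    cycleCount (tauBig n r d * hPermBig h) R
      = ∑ i ∈ Finset.univ.filter (fun i => d i ∣ R), cycleCount (mComp (h i)) (R / d i) := by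
  have hbig : tauBig n r d * hPermBig h
      = Equiv.sigmaCongrRight (fun i => tauGrid (r i) (d i) * gridPerm (r i) (d i) (h i)) := by
    apply Equiv.ext
    rintro ⟨i, p⟩
    rfl
  apply Nat.eq_of_mul_eq_mul_left (show 0 < R by omega)
  rw [← card_filter_minimalPeriod _ R hR, hbig]
  have hset : (Finset.univ.filter fun x : Σ i : Fin n, Fin (r i) × Fin (d i) =>
        Function.minimalPeriod
          (⇑(Equiv.sigmaCongrRight
            (fun i => tauGrid (r i) (d i) * gridPerm (r i) (d i) (h i)))) x = R)
      = Finset.univ.sigma (fun i : Fin n => Finset.univ.filter fun p : Fin (r i) × Fin (d i) =>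
          Function.minimalPeriod (⇑(tauGrid (r i) (d i) * gridPerm (r i) (d i) (h i))) p = R) := by
    ext ⟨i, p⟩
    simp only [Finset.mem_filter, Finset.mem_univ, true_and, Finset.mem_sigma]
    rw [sigma_minimalPeriod]
  rw [hset, Finset.card_sigma]
  have hterm : ∀ i : Fin n,
      (Finset.univ.filter fun p : Fin (r i) × Fin (d i) =>
        Function.minimalPeriod (⇑(tauGrid (r i) (d i) * gridPerm (r i) (d i) (h i))) p = R).card
      = R * (if d i ∣ R then cycleCount (mComp (h i)) (R / d i) else 0) := by
    intro i
    rw [card_filter_minimalPeriod _ R hR, grid_cc (d i) (h i) R hR]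
  rw [Finset.sum_congr rfl (fun i _ => hterm i), ← Finset.mul_sum]
  congr 1
  rw [Finset.sum_filter]
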